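/- For t > 1 and (x,y) ≠ (0,0) with x²+y² ≤ 1, the operator norm of the Jacobian matrix J(f^(t))(x,y) (as a linear map from ℝ² to ℝ² with Euclidean norms) equals t/(1+(t-1)√(x²+y²)). -/

import Mathlib

lemma euclid_apply (A : Matrix (Fin 2) (Fin 2) ℝ) (v : EuclideanSpace ℝ (Fin 2)) (i : Fin 2) :
    (Matrix.toEuclideanCLM (𝕜 := ℝ) (n := Fin 2) A) v i =
      A i 0 * v 0 + A i 1 * v 1 := by
  have := congrFun (Matrix.ofLp_toEuclideanCLM A v) i
  simp [Matrix.toLin'_apply, Matrix.mulVec, dotProduct, Fin.sum_univ_two] at this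
  fin_cases i <;> simp [Matrix.mulVec, dotProduct, Fin.sum_univ_two]

lemma euclid_norm (v : EuclideanSpace ℝ (Fin 2)) :
    ‖v‖ = Real.sqrt ((v 0)^2 + (v 1)^2) := by
  rw [EuclideanSpace.norm_eq]
  simp [Fin.sum_univ_two, sq_abs]

theorem stmt_7 (t x y : ℝ) (ht : 1 < t) (hxy : (x, y) ≠ (0, 0)) (hle : x^2 + y^2 ≤ 1) :
    ‖Matrix.toEuclideanCLM (𝕜 := ℝ) (n := Fin 2)
        ((1 / (Real.sqrt (x^2 + y^2) * (1 + (t-1)*Real.sqrt (x^2 + y^2))^2)) •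
          !![t*Real.sqrt (x^2 + y^2) + t*(t-1)*y^2, t*(1-t)*x*y;
             t*(1-t)*x*y, t*Real.sqrt (x^2 + y^2) + t*(t-1)*x^2])‖
      = t / (1 + (t-1)*Real.sqrt (x^2 + y^2)) := by
  have hne : x ≠ 0 ∨ y ≠ 0 := by
    by_contra h
    push_neg at h
    exact hxy (by simp [h.1, h.2])
  have h0 : 0 < x^2 + y^2 := by
    rcases hne with h | h <;> positivity
  set r := Real.sqrt (x^2 + y^2) with hr_def
  have hr2 : r^2 = x^2 + y^2 := Real.sq_sqrt h0.le
  have hrpos : 0 < r := Real.sqrt_pos.mpr h0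
  clear_value r
  set s := 1 + (t-1)*r with hs_def
  have hs1 : 1 < s := by rw [hs_def]; nlinarith
  have hspos : 0 < s := by linarith
  set c := 1 / (r * s^2) with hc_def
  have hcpos : 0 < c := by rw [hc_def]; positivity
  set μ := t / s with hμ_def
  have hμpos : 0 < μ := by rw [hμ_def]; positivity
  set A : Matrix (Fin 2) (Fin 2) ℝ :=
    !![t*r + t*(t-1)*y^2, t*(1-t)*x*y; t*(1-t)*x*y, t*r + t*(t-1)*x^2] with hA_def
  set T := Matrix.toEuclideanCLM (𝕜 := ℝ) (n := Fin 2) (c • A) with hT_def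
  have hTapp : ∀ (v : EuclideanSpace ℝ (Fin 2)) (i : Fin 2),
      T v i = c * (A i 0 * v 0 + A i 1 * v 1) := by
    intro v i
    rw [hT_def, euclid_apply]
    simp [Matrix.smul_apply]
    ring
  have hA00 : A 0 0 = t*r + t*(t-1)*y^2 := by rw [hA_def]; simp
  have hA01 : A 0 1 = t*(1-t)*x*y := by rw [hA_def]; simp
  have hA10 : A 1 0 = t*(1-t)*x*y := by rw [hA_def]; simp
  have hA11 : A 1 1 = t*r + t*(t-1)*x^2 := by rw [hA_def]; simp
  have hc2 : c^2 * (t^2 * r^2 * s^2) = μ^2 := by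
    rw [hc_def, hμ_def]
    field_simp
  refine le_antisymm ?_ ?_
  · apply ContinuousLinearMap.opNorm_le_bound _ hμpos.le
    intro v
    set u := v 0 with hu_def
    set w := v 1 with hw_def
    have h1 : T v 0 = c * ((t*r + t*(t-1)*y^2) * u + (t*(1-t)*x*y) * w) := by
      rw [hTapp, hA00, hA01]
    have h2 : T v 1 = c * ((t*(1-t)*x*y) * u + (t*r + t*(t-1)*x^2) * w) := by
      rw [hTapp, hA10, hA11]
    rw [euclid_norm (T v), euclid_norm v, ← hu_def, ← hw_def, h1, h2]
    rw [show μ * Real.sqrt (u^2 + w^2) = Real.sqrt (μ^2 * (u^2 + w^2)) by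
      rw [Real.sqrt_mul (by positivity), Real.sqrt_sq hμpos.le]]
    apply Real.sqrt_le_sqrt
    -- key algebraic decomposition
    have e1 : ((t*r + t*(t-1)*y^2) * u + (t*(1-t)*x*y) * w)^2 +
        ((t*(1-t)*x*y) * u + (t*r + t*(t-1)*x^2) * w)^2
        = t^2*r^2*(u^2+w^2) + 2*t^2*(t-1)*r*(x*w-y*u)^2
          + t^2*(t-1)^2*(x*w-y*u)^2*r^2 := by
      linear_combination (-(t^2*(t-1)^2*(x*w-y*u)^2)) * hr2
    have e2 : t^2*r^2*s^2*(u^2+w^2)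
        = t^2*r^2*(u^2+w^2) + 2*t^2*(t-1)*r*(x*w-y*u)^2
          + t^2*(t-1)^2*(x*w-y*u)^2*r^2
          + (2*t^2*(t-1)*r + t^2*(t-1)^2*r^2)*(x*u+y*w)^2 := by
      rw [hs_def]
      linear_combination (2*t^2*(t-1)*r + t^2*(t-1)^2*r^2)*(u^2+w^2) * hr2
    have hpos : 0 ≤ (2*t^2*(t-1)*r + t^2*(t-1)^2*r^2)*(x*u+y*w)^2 := by
      apply mul_nonneg _ (sq_nonneg _)
      have ht1 : (0:ℝ) ≤ t - 1 := by linarith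
      have ha : (0:ℝ) ≤ 2*t^2*(t-1)*r :=
        mul_nonneg (mul_nonneg (by positivity) ht1) hrpos.le
      have hb : (0:ℝ) ≤ t^2*(t-1)^2*r^2 := by positivity
      linarith
    have key : ((t*r + t*(t-1)*y^2) * u + (t*(1-t)*x*y) * w)^2 +
        ((t*(1-t)*x*y) * u + (t*r + t*(t-1)*x^2) * w)^2
        ≤ t^2*r^2*s^2*(u^2+w^2) := by
      rw [e1, e2]; linarith
    calc (c * ((t*r + t*(t-1)*y^2) * u + (t*(1-t)*x*y) * w))^2 +
        (c * ((t*(1-t)*x*y) * u + (t*r + t*(t-1)*x^2) * w))^2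
        = c^2 * (((t*r + t*(t-1)*y^2) * u + (t*(1-t)*x*y) * w)^2 +
            ((t*(1-t)*x*y) * u + (t*r + t*(t-1)*x^2) * w)^2) := by ring
      _ ≤ c^2 * (t^2 * r^2 * s^2 * (u^2 + w^2)) :=
          mul_le_mul_of_nonneg_left key (sq_nonneg c)
      _ = μ^2 * (u^2 + w^2) := by rw [← hc2]; ring
  · set v : EuclideanSpace ℝ (Fin 2) := (WithLp.equiv 2 (Fin 2 → ℝ)).symm ![-y, x] with hv_def
    have hv0 : v 0 = -y := rfl
    have hv1 : v 1 = x := rfl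
    have hTv0 : T v 0 = -(μ * y) := by
      rw [hTapp, hA00, hA01, hv0, hv1, hc_def, hμ_def]
      have hy : (t*r + t*(t-1)*y^2) * (-y) + t*(1-t)*x*y * x = -(t * r * s * y) := by
        rw [hs_def]; linear_combination (t*(t-1)*y) * hr2
      rw [hy]
      field_simp
    have hTv1 : T v 1 = μ * x := by
      rw [hTapp, hA10, hA11, hv0, hv1, hc_def, hμ_def]
      have hy : t*(1-t)*x*y * (-y) + (t*r + t*(t-1)*x^2) * x = t * r * s * x := by
        rw [hs_def]; linear_combination (-(t*(t-1)*x)) * hr2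
      rw [hy]
      field_simp
    have hnv : ‖v‖ = r := by
      rw [euclid_norm, hv0, hv1]
      rw [show (-y)^2 + x^2 = x^2 + y^2 by ring, ← hr_def]
    have hnTv : ‖T v‖ = μ * r := by
      rw [euclid_norm, hTv0, hTv1]
      rw [show (-(μ*y))^2 + (μ*x)^2 = μ^2 * (x^2+y^2) by ring]
      rw [Real.sqrt_mul (by positivity), Real.sqrt_sq hμpos.le, ← hr_def]
    have := T.le_opNorm v
    rw [hnTv, hnv] at this
    exact le_of_mul_le_mul_right this hrpos
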